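/- For n = m², the number of m×m almost-balanced 0–1 matrices is o(2^n); more precisely, A(m,m) ≤ m · (2·C(m,⌈m/2⌉))^m, and (2·C(m,⌈m/2⌉))^m = 2^{n − Ω(√n · log n)}. -/

import Mathlib

/-- Number of nonzero (true) entries in row `i` of a 0-1 matrix. -/
def rowCount {a b : ℕ} (M : Fin a → Fin b → Bool) (i : Fin a) : ℕ :=
  (Finset.univ.filter (fun j => M i j = true)).card

/-- A 0-1 matrix is almost balanced if every two rows have numbers of
nonzeros differing by at most one. -/
def AlmostBalanced {a b : ℕ} (M : Fin a → Fin b → Bool) : Prop :=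
  ∀ i i' : Fin a, rowCount M i ≤ rowCount M i' + 1

/-- The number of `m × m` almost-balanced 0-1 matrices, via the summation formula. -/
def A (m : ℕ) : ℤ :=
  ∑ i ∈ Finset.range m, ((m.choose i : ℤ) + (m.choose (i+1) : ℤ)) ^ m -
    ∑ i ∈ Finset.Ico 1 m, (m.choose i : ℤ) ^ m


lemma cb_sq (k : ℕ) : (Nat.centralBinom k)^2 * (k+1) ≤ 16^k := by
  induction k with
  | zero => simp [Nat.centralBinom]
  | succ k ih =>
    have h := Nat.succ_mul_centralBinom_succ k
    have hpos : 0 < (k+1)^3 := by positivity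
    refine Nat.le_of_mul_le_mul_right ?_ hpos
    calc (Nat.centralBinom (k+1))^2 * (k+1+1) * (k+1)^3
        = ((k+1) * Nat.centralBinom (k+1))^2 * ((k+2)*(k+1)) := by ring
      _ = (2*(2*k+1) * Nat.centralBinom k)^2 * ((k+2)*(k+1)) := by rw [h]
      _ = (Nat.centralBinom k ^ 2 * (k+1)) * (4*(2*k+1)^2*(k+2)) := by ring
      _ ≤ 16^k * (4*(2*k+1)^2*(k+2)) := Nat.mul_le_mul_right _ ih
      _ ≤ 16^k * (16*(k+1)^3) := Nat.mul_le_mul_left _ (by nlinarith)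
      _ = 16^(k+1) * (k+1)^3 := by ring

lemma choose_sq (m : ℕ) : (m.choose ((m+1)/2))^2 * m ≤ 2 * 4^m := by
  rcases Nat.even_or_odd m with ⟨k, hk⟩ | ⟨k, hk⟩
  · subst hk
    have h2 : (k+k+1)/2 = k := by omega
    have h3 : (k+k).choose k = Nat.centralBinom k := by
      rw [Nat.centralBinom, two_mul]
    have h16 : (16:ℕ)^k = 4^(k+k) := by
      rw [show (16:ℕ) = 4^2 by norm_num, ← pow_mul]
      congr 1; omega
    rw [h2, h3]
    calc (Nat.centralBinom k)^2 * (k+k)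
        ≤ (Nat.centralBinom k)^2 * (k+1) * 2 := by nlinarith [sq_nonneg (Nat.centralBinom k)]
      _ ≤ 16^k * 2 := Nat.mul_le_mul_right _ (cb_sq k)
      _ = 2 * 4^(k+k) := by rw [h16]; ring
  · subst hk
    have h2 : (2*k+1+1)/2 = k+1 := by omega
    rw [h2]
    have hd : (2*k)/2 = k := by omega
    have h4 : (2*k).choose (k+1) ≤ (2*k).choose k := by
      have := Nat.choose_le_middle (k+1) (2*k)
      rwa [hd] at this
    have hch : (2*k+1).choose (k+1) ≤ 2 * Nat.centralBinom k := by
      have h5 : (2*k+1).choose (k+1) = (2*k).choose k + (2*k).choose (k+1) :=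
        Nat.choose_succ_succ (2*k) k
      rw [Nat.centralBinom]
      omega
    have h16 : (4:ℕ)^(2*k+1) = 4 * 16^k := by
      rw [show (16:ℕ) = 4^2 by norm_num, ← pow_mul, pow_succ]
      ring
    calc ((2*k+1).choose (k+1))^2 * (2*k+1)
        ≤ (2 * Nat.centralBinom k)^2 * (2*(k+1)) := by
          refine Nat.mul_le_mul (Nat.pow_le_pow_left hch 2) (by omega)
      _ = (Nat.centralBinom k ^ 2 * (k+1)) * 8 := by ring
      _ ≤ 16^k * 8 := Nat.mul_le_mul_right _ (cb_sq k)
      _ = 2 * 4^(2*k+1) := by rw [h16]; ring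

lemma choose_le_mid (m i : ℕ) : m.choose i ≤ m.choose ((m+1)/2) := by
  have h1 : m.choose ((m+1)/2) = m.choose (m/2) := by
    rw [← Nat.choose_symm (show (m+1)/2 ≤ m by omega)]
    congr 1; omega
  rw [h1]
  exact Nat.choose_le_middle i m

lemma A_nonneg (m : ℕ) : 0 ≤ A m := by
  unfold A
  have hsub : Finset.Ico 1 m ⊆ Finset.range m := by
    intro x hx; simp only [Finset.mem_Ico, Finset.mem_range] at *; omega
  have h : ∑ i ∈ Finset.Ico 1 m, (m.choose i : ℤ) ^ m ≤
      ∑ i ∈ Finset.range m, ((m.choose i : ℤ) + (m.choose (i+1) : ℤ)) ^ m := by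
    calc ∑ i ∈ Finset.Ico 1 m, (m.choose i : ℤ) ^ m
        ≤ ∑ i ∈ Finset.Ico 1 m, ((m.choose i : ℤ) + (m.choose (i+1) : ℤ)) ^ m := by
          refine Finset.sum_le_sum fun i _ => ?_
          exact pow_le_pow_left₀ (by positivity) (le_add_of_nonneg_right (by positivity)) m
      _ ≤ _ := by
          refine Finset.sum_le_sum_of_subset_of_nonneg hsub fun i _ _ => by positivity
  linarith

lemma A_le (m : ℕ) : A m ≤ (m : ℤ) * ((2 * (m.choose ((m+1)/2)) : ℕ) : ℤ) ^ m := by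
  unfold A
  have h2 : ∑ i ∈ Finset.range m, ((m.choose i : ℤ) + (m.choose (i+1) : ℤ)) ^ m ≤
      (m : ℤ) * ((2 * (m.choose ((m+1)/2)) : ℕ) : ℤ) ^ m := by
    calc ∑ i ∈ Finset.range m, ((m.choose i : ℤ) + (m.choose (i+1) : ℤ)) ^ m
        ≤ ∑ _i ∈ Finset.range m, ((2 * (m.choose ((m+1)/2)) : ℕ) : ℤ) ^ m := by
          refine Finset.sum_le_sum fun i _ => ?_
          refine pow_le_pow_left₀ (by positivity) ?_ m
          have a := choose_le_mid m i
          have b := choose_le_mid m (i+1)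
          push_cast
          omega
      _ = (m : ℤ) * ((2 * (m.choose ((m+1)/2)) : ℕ) : ℤ) ^ m := by
          rw [Finset.sum_const, Finset.card_range]; simp [nsmul_eq_mul]
  have h3 : 0 ≤ ∑ i ∈ Finset.Ico 1 m, (m.choose i : ℤ) ^ m :=
    Finset.sum_nonneg fun i _ => by positivity
  linarith

lemma part3 (m : ℕ) (hm : 8192 ≤ m) :
    ((2 * (m.choose ((m+1)/2)) : ℕ) : ℝ) ^ m ≤
      2 ^ ((m * m : ℕ) - (1/100:ℝ) * Real.sqrt ((m : ℝ) * m) * Real.log ((m : ℝ) * m)) := by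
  set x := (m:ℝ) with hxdef
  have hx : (8192:ℝ) ≤ x := by rw [hxdef]; exact_mod_cast hm
  have hx0 : (0:ℝ) < x := by linarith
  have hsq : Real.sqrt (x*x) = x := Real.sqrt_mul_self hx0.le
  have hlogmm : Real.log (x*x) = 2 * Real.log x := by
    rw [Real.log_mul hx0.ne' hx0.ne']; ring
  have hC : ((2 * (m.choose ((m+1)/2)) : ℕ) : ℝ)^2 * x ≤ 8 * 4^m := by
    have h := choose_sq m
    have h' : ((m.choose ((m+1)/2) : ℝ))^2 * x ≤ 2 * 4^m := by rw [hxdef]; exact_mod_cast h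
    push_cast
    nlinarith [h']
  have key : ((2 * (m.choose ((m+1)/2)) : ℕ) : ℝ) ≤ 2 ^ (x - Real.log x/50) := by
    have h2pos : (0:ℝ) < 2 ^ (x - Real.log x/50) := Real.rpow_pos_of_pos two_pos _
    refine le_of_pow_le_pow_left₀ two_ne_zero h2pos.le ?_
    have hsq2 : ((2:ℝ) ^ (x - Real.log x/50))^2 = 2^(2*x) / 2^(Real.log x/25) := by
      rw [← Real.rpow_natCast ((2:ℝ) ^ (x - Real.log x/50)) 2, ← Real.rpow_mul (by norm_num)]
      rw [show (x - Real.log x/50) * ((2:ℕ):ℝ) = 2*x - Real.log x/25 by push_cast; ring]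
      exact Real.rpow_sub two_pos _ _
    have h4 : (2:ℝ)^(2*x) = 4^m := by
      rw [show (2:ℝ)*x = ((2*m:ℕ):ℝ) by push_cast; ring, Real.rpow_natCast, pow_mul]
      norm_num
    have hexp : (2:ℝ) ^ (Real.log x/25) ≤ x/8 := by
      rw [Real.rpow_def_of_pos two_pos,
        show x/8 = Real.exp (Real.log (x/8)) by rw [Real.exp_log (by linarith)]]
      apply Real.exp_le_exp.mpr
      rw [Real.log_div hx0.ne' (by norm_num)]
      have l8 : Real.log 8 = 3 * Real.log 2 := by
        rw [show (8:ℝ) = 2^3 by norm_num, Real.log_pow]; push_cast; ring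
      have lx : 13 * Real.log 2 ≤ Real.log x := by
        have h1 : Real.log 8192 ≤ Real.log x := Real.log_le_log (by norm_num) hx
        rw [show (8192:ℝ) = 2^13 by norm_num, Real.log_pow] at h1
        push_cast at h1
        linarith
      have l2pos : (0:ℝ) < Real.log 2 := Real.log_pos one_lt_two
      have l2lt : Real.log 2 < 1 := by nlinarith [Real.log_two_lt_d9]
      rw [l8]
      nlinarith [mul_lt_mul_of_pos_left l2lt (show (0:ℝ) < Real.log x by linarith)]
    rw [hsq2, h4, le_div_iff₀ (Real.rpow_pos_of_pos two_pos _)]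
    calc ((2 * (m.choose ((m+1)/2)) : ℕ) : ℝ)^2 * 2 ^ (Real.log x/25)
        ≤ ((2 * (m.choose ((m+1)/2)) : ℕ) : ℝ)^2 * (x/8) := by
          exact mul_le_mul_of_nonneg_left hexp (by positivity)
      _ = (((2 * (m.choose ((m+1)/2)) : ℕ) : ℝ)^2 * x)/8 := by ring
      _ ≤ (8 * 4^m)/8 := by linarith
      _ = 4^m := by ring
  calc ((2 * (m.choose ((m+1)/2)) : ℕ) : ℝ) ^ m
      ≤ ((2:ℝ) ^ (x - Real.log x/50)) ^ m := pow_le_pow_left₀ (by positivity) key m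
    _ = 2 ^ ((x - Real.log x/50) * m) := by
        rw [← Real.rpow_natCast ((2:ℝ) ^ (x - Real.log x/50)) m,
          ← Real.rpow_mul (by norm_num)]
    _ = 2 ^ (((m * m : ℕ):ℝ) - (1/100:ℝ) * Real.sqrt (x*x) * Real.log (x*x)) := by
        rw [hsq, hlogmm]
        congr 1
        push_cast
        ring

open Filter Asymptotics in
lemma part1 : (fun m : ℕ => (A m : ℝ)) =o[atTop] fun m : ℕ => (2 : ℝ) ^ (m * m) := by
  have hO : (fun m : ℕ => (A m : ℝ)) =O[atTop] fun m : ℕ => ((1:ℝ)/8)^m * 2^(m*m) := by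
    rw [Asymptotics.isBigO_iff]
    refine ⟨1, ?_⟩
    filter_upwards [Filter.eventually_ge_atTop 8192] with m hm
    have hA0 : (0:ℝ) ≤ (A m : ℝ) := by exact_mod_cast A_nonneg m
    have hAle : (A m : ℝ) ≤ m * ((2 * (m.choose ((m+1)/2)) : ℕ) : ℝ)^m := by
      exact_mod_cast A_le m
    have hmx : (8192:ℝ) ≤ (m:ℝ) := by exact_mod_cast hm
    have hC2 : ((2 * (m.choose ((m+1)/2)) : ℕ) : ℝ)^2 * m ≤ 8 * 4^m := by
      have h := choose_sq m
      have h' : ((m.choose ((m+1)/2) : ℝ))^2 * m ≤ 2 * 4^m := by exact_mod_cast h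
      push_cast
      nlinarith [h']
    have hC : ((2 * (m.choose ((m+1)/2)) : ℕ) : ℝ) ≤ 2^m/16 := by
      refine le_of_pow_le_pow_left₀ two_ne_zero (by positivity) ?_
      have h4 : ((2:ℝ)^m)^2 = 4^m := by
        rw [← pow_mul, mul_comm, pow_mul]; norm_num
      rw [div_pow, h4]
      rw [le_div_iff₀ (by norm_num)]
      nlinarith [hC2, sq_nonneg ((2 * (m.choose ((m+1)/2)) : ℕ) : ℝ)]
    have hm2 : (m:ℝ) ≤ 2^m := by exact_mod_cast (Nat.lt_two_pow_self (n := m)).le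
    have hid : (2:ℝ)^m * ((2:ℝ)^m/16)^m = (1/8:ℝ)^m * 2^(m*m) := by
      rw [show (1/8:ℝ) = 2/16 by norm_num, div_pow, div_pow, ← pow_mul]; ring
    have hbound : (A m : ℝ) ≤ (1/8:ℝ)^m * 2^(m*m) := by
      calc (A m : ℝ) ≤ m * ((2 * (m.choose ((m+1)/2)) : ℕ) : ℝ)^m := hAle
        _ ≤ 2^m * ((2:ℝ)^m/16)^m := by
            exact mul_le_mul hm2 (pow_le_pow_left₀ (by positivity) hC m) (by positivity)
              (by positivity)
        _ = (1/8:ℝ)^m * 2^(m*m) := hid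
    have hgpos : (0:ℝ) ≤ (1/8:ℝ)^m * 2^(m*m) := by positivity
    rw [Real.norm_eq_abs, Real.norm_eq_abs, abs_of_nonneg hA0, abs_of_nonneg hgpos, one_mul]
    exact hbound
  have h1 : (fun m : ℕ => ((1:ℝ)/8)^m) =o[atTop] (fun _ : ℕ => (1:ℝ)) :=
    (Asymptotics.isLittleO_one_iff ℝ).mpr
      (tendsto_pow_atTop_nhds_zero_of_lt_one (by norm_num) (by norm_num))
  have hlo := h1.mul_isBigO (Asymptotics.isBigO_refl (fun m : ℕ => (2:ℝ)^(m*m)) atTop)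
  simp only [one_mul] at hlo
  exact hO.trans_isLittleO hlo

open Filter Asymptotics in
theorem A_little_o :
    ((fun m : ℕ => (A m : ℝ)) =o[atTop] fun m : ℕ => (2 : ℝ) ^ (m * m)) ∧
    (∀ m : ℕ, 0 < m → A m ≤ (m : ℤ) * ((2 * (m.choose ((m+1)/2)) : ℕ) : ℤ) ^ m) ∧
    (∃ c : ℝ, 0 < c ∧ ∃ N : ℕ, ∀ m : ℕ, N ≤ m →
      ((2 * (m.choose ((m+1)/2)) : ℕ) : ℝ) ^ m ≤
        2 ^ ((m * m : ℕ) - c * Real.sqrt ((m : ℝ) * m) * Real.log ((m : ℝ) * m))) := by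
  refine ⟨part1, fun m _ => A_le m, ⟨1/100, by norm_num, 8192, part3⟩⟩
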